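/- Let K be a field with char(K) ≠ 2 and n ∈ ℕ. Then every n×n matrix over K can be written as PQ + P^T Q^T for some n×n matrices P and Q; in fact P and Q can both be chosen symmetric, so that PQ + P^T Q^T = PQ + QP. -/

import Mathlib

set_option maxHeartbeats 1000000

open Matrix Polynomial

universe u

variable {K : Type u} [Field K]

/-- A "good form" for a `K[X]`-module: a nondegenerate symmetric `K`-bilinear form for
which every polynomial scalar is self-adjoint. -/
def HasGoodForm (K : Type u) [Field K] (M : Type*) [AddCommGroup M] [Module K M]
    [Module K[X] M] [IsScalarTower K K[X] M] : Prop :=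
  ∃ B : M →ₗ[K] M →ₗ[K] K,
    (∀ x y, B x y = B y x) ∧ (∀ x, (∀ y, B x y = 0) → x = 0) ∧
    (∀ (c : K[X]) (x y : M), B (c • x) y = B x (c • y))

section Cyclic

noncomputable def modHom {q : K[X]} (hq : q.Monic) : (K[X] ⧸ Ideal.span {q}) →ₗ[K] K[X] :=
  (Submodule.liftQ _ (Polynomial.modByMonicHom q)
        fun f (hf : f ∈ (Ideal.span {q}).restrictScalars K) =>
        (Polynomial.mem_ker_modByMonic hq).mpr (Ideal.mem_span_singleton.mp hf)).comp <|
    (Submodule.Quotient.restrictScalarsEquiv K (Ideal.span {q} : Ideal K[X])).symm.toLinearMap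

@[simp] theorem modHom_mk {q : K[X]} (hq : q.Monic) (f : K[X]) :
    modHom hq (Ideal.Quotient.mk (Ideal.span {q}) f) = f %ₘ q := rfl

theorem mk_modHom {q : K[X]} (hq : q.Monic) (x : K[X] ⧸ Ideal.span {q}) :
    Ideal.Quotient.mk (Ideal.span {q}) (modHom hq x) = x := by
  obtain ⟨f, rfl⟩ := Ideal.Quotient.mk_surjective x
  rw [modHom_mk, Ideal.Quotient.eq, modByMonic_eq_sub_mul_div _ q]
  simp [Ideal.mem_span_singleton, sub_sub_cancel_left, dvd_neg, dvd_mul_right]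

theorem hasGoodForm_quotient_span_monic {q : K[X]} (hq : q.Monic) :
    HasGoodForm K (K[X] ⧸ Ideal.span {q}) := by
  classical
  set d := q.natDegree with hd
  set lam : (K[X] ⧸ Ideal.span {q}) →ₗ[K] K := (Polynomial.lcoeff K (d - 1)).comp (modHom hq)
    with hlam
  refine ⟨LinearMap.mk₂ K (fun x y => lam (x * y))
      (fun x x' y => by rw [add_mul, map_add])
      (fun c x y => by rw [smul_mul_assoc, _root_.map_smul])
      (fun x y y' => by rw [mul_add, map_add])
      (fun c x y => by rw [mul_smul_comm, _root_.map_smul]), ?_, ?_, ?_⟩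
  · intro x y; simp [mul_comm]
  · intro x hx
    by_contra hx0
    set r : K[X] := modHom hq x with hr
    have hxr : Ideal.Quotient.mk (Ideal.span {q}) r = x := mk_modHom hq x
    have hrne : r ≠ 0 := by
      intro h; rw [h] at hxr; simp only [map_zero] at hxr; exact hx0 hxr.symm
    have hrd : r.degree < q.degree := by
      obtain ⟨f, rfl⟩ := Ideal.Quotient.mk_surjective x
      rw [hr, modHom_mk]; exact degree_modByMonic_lt f hq
    have hdpos : 0 < d := by
      rcases Nat.eq_zero_or_pos d with h0 | h
      · exfalso
        have hq1 : q = 1 := hq.natDegree_eq_zero.mp h0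
        apply hx0
        rw [← hxr, Ideal.Quotient.eq_zero_iff_mem, hq1, Ideal.span_singleton_one]
        trivial
      · exact h
    have hm : r.natDegree < d := by
      rwa [← natDegree_lt_natDegree_iff hrne] at hrd
    obtain ⟨k, hk⟩ : ∃ k, d - 1 = r.natDegree + k := ⟨d - 1 - r.natDegree, by omega⟩
    have key := hx (Ideal.Quotient.mk _ (X ^ k))
    rw [LinearMap.mk₂_apply, ← hxr, ← _root_.map_mul] at key
    have hdeg : (r * X ^ k).degree < q.degree := by
      rw [degree_mul, degree_X_pow, degree_eq_natDegree hrne, ← Nat.cast_add,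
        degree_eq_natDegree hq.ne_zero]
      exact_mod_cast (by omega : r.natDegree + k < d)
    rw [hlam] at key
    simp only [LinearMap.comp_apply, modHom_mk, lcoeff_apply] at key
    rw [(modByMonic_eq_self_iff hq).mpr hdeg, hk, coeff_mul_X_pow] at key
    exact hrne (leadingCoeff_eq_zero.mp key)
  · intro c x y
    rw [LinearMap.mk₂_apply, LinearMap.mk₂_apply]
    obtain ⟨f, rfl⟩ := Ideal.Quotient.mk_surjective x
    obtain ⟨g, rfl⟩ := Ideal.Quotient.mk_surjective y
    have h1 : c • Ideal.Quotient.mk (Ideal.span {q}) f = Ideal.Quotient.mk _ (c * f) := rfl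
    have h2 : c • Ideal.Quotient.mk (Ideal.span {q}) g = Ideal.Quotient.mk _ (c * g) := rfl
    rw [h1, h2, ← _root_.map_mul, ← _root_.map_mul, show c * f * g = f * (c * g) by ring]

end Cyclic



theorem HasGoodForm.of_equiv {M N : Type*} [AddCommGroup M] [Module K M] [Module K[X] M]
    [IsScalarTower K K[X] M] [AddCommGroup N] [Module K N] [Module K[X] N]
    [IsScalarTower K K[X] N] (e : M ≃ₗ[K[X]] N) (h : HasGoodForm K N) : HasGoodForm K M := by
  obtain ⟨B, hsym, hnd, hcomp⟩ := h
  let eK : M →ₗ[K] N := (e.restrictScalars K).toLinearMap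
  refine ⟨B.compl₁₂ eK eK, fun x y => hsym _ _, fun x hx => ?_, fun c x y => ?_⟩
  · have : e x = 0 := by
      apply hnd
      intro y
      have := hx (e.symm y)
      simpa [eK] using this
    exact e.injective (by simpa using this)
  · have h1 : eK (c • x) = c • eK x := e.map_smul c x
    have h2 : eK (c • y) = c • eK y := e.map_smul c y
    simp only [LinearMap.compl₁₂_apply, eK] at *
    rw [h1, h2, hcomp]

theorem HasGoodForm.pi {ι : Type*} [Fintype ι] [DecidableEq ι] (M : ι → Type*)
    [∀ i, AddCommGroup (M i)] [∀ i, Module K (M i)] [∀ i, Module K[X] (M i)]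
    [∀ i, IsScalarTower K K[X] (M i)] (h : ∀ i, HasGoodForm K (M i)) :
    HasGoodForm K (∀ i, M i) := by
  choose B hsym hnd hcomp using h
  refine ⟨LinearMap.mk₂ K (fun x y => ∑ i, B i (x i) (y i))
      (fun x x' y => by simp [Finset.sum_add_distrib])
      (fun c x y => by simp [Finset.mul_sum])
      (fun x y y' => by simp [Finset.sum_add_distrib])
      (fun c x y => by simp [Finset.mul_sum]), fun x y => ?_, fun x hx => ?_, fun c x y => ?_⟩
  · simp only [LinearMap.mk₂_apply]
    exact Finset.sum_congr rfl fun i _ => hsym i _ _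
  · funext i
    apply hnd i
    intro z
    have := hx (Pi.single i z)
    simp only [LinearMap.mk₂_apply] at this
    rw [Finset.sum_eq_single i] at this
    · simpa using this
    · intro j _ hj; simp [Pi.single_eq_of_ne hj]
    · intro hi; exact absurd (Finset.mem_univ i) hi
  · simp only [LinearMap.mk₂_apply, Pi.smul_apply]
    exact Finset.sum_congr rfl fun i _ => hcomp i c _ _

theorem hasGoodForm_quotient_span {q : K[X]} (hq : q ≠ 0) :
    HasGoodForm K (K[X] ⧸ (K[X] ∙ q)) := by
  have hI : (K[X] ∙ q) = Ideal.span {q * C q.leadingCoeff⁻¹} := by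
    rw [Ideal.submodule_span_eq]
    exact (Ideal.span_singleton_eq_span_singleton (α := K[X])).mpr
      <|
      (associated_mul_unit_right q (C q.leadingCoeff⁻¹) (isUnit_C.mpr (isUnit_iff_ne_zero.mpr
        (inv_ne_zero (leadingCoeff_ne_zero.mpr hq)))))
  rw [hI]
  exact hasGoodForm_quotient_span_monic (monic_mul_leadingCoeff_inv hq)

theorem exists_good_bilin {V : Type u} [AddCommGroup V] [Module K V] [FiniteDimensional K V]
    (f : V →ₗ[K] V) :
    ∃ B : V →ₗ[K] V →ₗ[K] K,
      (∀ x y, B x y = B y x) ∧ (∀ x, (∀ y, B x y = 0) → x = 0) ∧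
      (∀ x y, B (f x) y = B x (f y)) := by
  classical
  have htor : Module.IsTorsion K[X] (Module.AEval' f) :=
    Module.AEval.isTorsion_of_finiteDimensional K V f
  obtain ⟨ι, hι, p, hp, e, ⟨g⟩⟩ := Module.equiv_directSum_of_isTorsion htor
  have hgood : HasGoodForm K (Module.AEval' f) := by
    refine HasGoodForm.of_equiv
      (g.trans (DirectSum.linearEquivFunOnFintype K[X] ι _)) (HasGoodForm.pi _ fun i => ?_)
    exact hasGoodForm_quotient_span (pow_ne_zero _ (hp i).ne_zero)
  obtain ⟨B, hsym, hnd, hcomp⟩ := hgood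
  let of := Module.AEval.of K V f
  refine ⟨B.compl₁₂ of.toLinearMap of.toLinearMap, fun x y => hsym _ _, fun x hx => ?_,
    fun x y => ?_⟩
  · have : of x = 0 := by
      apply hnd
      intro y
      have := hx (of.symm y)
      simpa using this
    simpa using of.injective (by simpa using this)
  · simp only [LinearMap.compl₁₂_apply, LinearEquiv.coe_coe]
    rw [show of (f x) = (X : K[X]) • of x from (Module.AEval'.X_smul_of f x).symm,
      show of (f y) = (X : K[X]) • of y from (Module.AEval'.X_smul_of f y).symm, hcomp]

/-- Every square matrix `M` admits a symmetric invertible `S` with `S * M = Mᵀ * S`. -/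
theorem exists_symm_intertwiner (n : ℕ) (M : Matrix (Fin n) (Fin n) K) :
    ∃ S : Matrix (Fin n) (Fin n) K, S.IsSymm ∧ S.det ≠ 0 ∧ S * M = Mᵀ * S := by
  obtain ⟨B, hsym, hnd, hadj⟩ := exists_good_bilin (M.mulVecLin)
  set es : Fin n → (Fin n → K) := fun i => Pi.single i (1 : K) with hes
  set S : Matrix (Fin n) (Fin n) K := Matrix.of fun i j => B (es i) (es j) with hS
  have hST : Sᵀ = S := by
    ext i j
    exact hsym (es j) (es i)
  have hrepr : ∀ x : Fin n → K, x = ∑ i, x i • es i := by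
    intro x
    funext k
    simp [hes, Finset.sum_apply, Pi.single_apply]
  have hB : ∀ x y : Fin n → K, B x y = ∑ i, ∑ j, x i * (y j * S i j) := by
    intro x y
    conv_lhs => rw [hrepr x, hrepr y]
    simp only [map_sum, LinearMap.sum_apply, _root_.map_smul, LinearMap.smul_apply,
      Finset.smul_sum, smul_eq_mul]
    conv_rhs => rw [Finset.sum_comm]
    refine Finset.sum_congr rfl fun j _ => ?_
    rw [Finset.mul_sum]
    refine Finset.sum_congr rfl fun i _ => ?_
    show y j * (x i * S i j) = x i * (y j * S i j)
    ring
  have hcol : ∀ j, M.mulVecLin (es j) = ∑ k, M k j • es k := by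
    intro j
    funext i
    simp [hes, Matrix.mulVec, dotProduct, Pi.single_apply, Finset.sum_apply, mul_comm]
  refine ⟨S, hST, ?_, ?_⟩
  · intro hdet
    obtain ⟨v, hv0, hv⟩ := Matrix.exists_mulVec_eq_zero_iff.mpr hdet
    apply hv0
    apply hnd
    intro y
    rw [hB, Finset.sum_comm]
    refine Finset.sum_eq_zero fun j _ => ?_
    have h1 : ∑ i, v i * S i j = 0 := by
      have h2 : (S *ᵥ v) j = 0 := by rw [hv]; rfl
      rw [Matrix.mulVec, dotProduct] at h2
      rw [← h2]
      refine Finset.sum_congr rfl fun i _ => ?_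
      rw [show S i j = S j i from congrFun (congrFun hST j) i]
      ring
    calc ∑ i, v i * (y j * S i j) = y j * ∑ i, v i * S i j := by
          rw [Finset.mul_sum]; exact Finset.sum_congr rfl fun i _ => by ring
      _ = 0 := by rw [h1, mul_zero]
  · ext i j
    have h := hadj (es i) (es j)
    rw [hcol i, hcol j, map_sum, LinearMap.sum_apply, map_sum] at h
    simp only [_root_.map_smul, LinearMap.smul_apply, smul_eq_mul] at h
    calc (S * M) i j = ∑ k, M k j * B (es i) (es k) := by
          rw [Matrix.mul_apply]
          exact Finset.sum_congr rfl fun k _ => by rw [mul_comm]; rfl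
      _ = ∑ k, M k i * B (es k) (es j) := h.symm
      _ = (Mᵀ * S) i j := by
          rw [Matrix.mul_apply]
          exact Finset.sum_congr rfl fun k _ => rfl

/-- If `char K ≠ 2`, every `n × n` matrix over `K` can be written as `PQ + PᵀQᵀ` with
`P` and `Q` both symmetric (so that `PQ + PᵀQᵀ = PQ + QP`). -/
theorem exists_symm_symm_eq {K : Type*} [Field K] (hchar : ringChar K ≠ 2)
    (n : ℕ) (M : Matrix (Fin n) (Fin n) K) :
    ∃ P Q : Matrix (Fin n) (Fin n) K,
      P.IsSymm ∧ Q.IsSymm ∧ M = P * Q + Pᵀ * Qᵀ := by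
  obtain ⟨S, hSsymm, hSdet, hSM⟩ := exists_symm_intertwiner n M
  have h2 : (2 : K) ≠ 0 := Ring.two_ne_zero hchar
  have hPsymm : (S⁻¹).IsSymm := by
    rw [Matrix.IsSymm, Matrix.transpose_nonsing_inv, hSsymm.eq]
  have hQsymm : ((2:K)⁻¹ • (S * M)).IsSymm := by
    rw [Matrix.IsSymm, Matrix.transpose_smul, Matrix.transpose_mul, hSsymm.eq, hSM]
  refine ⟨S⁻¹, (2 : K)⁻¹ • (S * M), hPsymm, hQsymm, ?_⟩
  have hinv : S⁻¹ * S = 1 := Matrix.nonsing_inv_mul S (isUnit_iff_ne_zero.mpr hSdet)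
  rw [hPsymm.eq, hQsymm.eq, Matrix.mul_smul, ← Matrix.mul_assoc, hinv, Matrix.one_mul, ← add_smul,
    show (2:K)⁻¹ + (2:K)⁻¹ = 1 by field_simp; norm_num, one_smul]
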